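/- arXiv:1610.02319 — 3 statements merged into one kernel-verified Lean document; each statement's English description precedes it below -/
import Mathlib

section
/- Let m ≥ 2 and let z₁, …, z_{2m} ∈ ℝ² be the sequentially enumerated vertices zⱼ = r₀(cos(π(j-1)/m), sin(π(j-1)/m)) with r₀ > 0 of a regular 2m-gon. Define α = -∑_{k=2}^{2m} (-1)ᵏ / (4π |z_k - z₁|). Then α ≠ 0; in fact α < 0. -/
open Real

/-- The point (a, b) of the Euclidean plane. -/
noncomputable def pt2 (a b : ℝ) : EuclideanSpace ℝ (Fin 2) :=
  (WithLp.equiv 2 (Fin 2 → ℝ)).symm ![a, b]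

lemma norm_pt2_sub (a b c d : ℝ) : ‖pt2 a b - pt2 c d‖ = Real.sqrt ((a-c)^2 + (b-d)^2) := by
  simp [pt2, EuclideanSpace.norm_eq, Fin.sum_univ_two, sq_abs]

lemma alt_aux (u : ℕ → ℝ) (n : ℕ) (hn : 2 ≤ n)
    (hpos : ∀ k, 2 ≤ k → k ≤ n → 0 < u k)
    (hdec : ∀ k, 2 ≤ k → k + 1 ≤ n → u (k+1) < u k) :
    0 < ∑ k ∈ Finset.Icc 2 n, (-1:ℝ)^k * u k := by
  suffices h : (0 < ∑ k ∈ Finset.Icc 2 n, (-1:ℝ)^k * u k) ∧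
      (Even n → u n ≤ ∑ k ∈ Finset.Icc 2 n, (-1:ℝ)^k * u k) from h.1
  induction n, hn using Nat.le_induction with
  | base =>
    simp [Finset.Icc_self]
    exact hpos 2 le_rfl le_rfl
  | succ n hn ih =>
    obtain ⟨h1, h2⟩ := ih (fun k hk hk' => hpos k hk (hk'.trans (Nat.le_succ n)))
      (fun k hk hk' => hdec k hk (hk'.trans (Nat.le_succ n)))
    rw [Finset.sum_Icc_succ_top (by omega : 2 ≤ n + 1)]
    rcases Nat.even_or_odd n with he | ho
    · have hsign : (-1:ℝ)^(n+1) = -1 := by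
        rw [pow_succ, he.neg_one_pow]; ring
      have hd := hdec n (by omega) le_rfl
      constructor
      · rw [hsign]
        have := h2 he
        nlinarith
      · intro hev
        exact absurd hev (by simp [Nat.even_add_one, he])
    · have hsign : (-1:ℝ)^(n+1) = 1 := by
        rw [pow_succ, ho.neg_one_pow]; ring
      have hp := hpos (n+1) (by omega) le_rfl
      constructor
      · rw [hsign]; nlinarith
      · intro _; rw [hsign]; nlinarith

set_option maxHeartbeats 1000000 in
/-- for the regular 2m-gon, the contact parameter
α = -∑_{k=2}^{2m} (-1)ᵏ/(4π|z_k - z₁|) is nonzero; in fact negative.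
Here z : ℕ → ℝ², z k = r₀(cos(π(k-1)/m), sin(π(k-1)/m)). -/
theorem stmt7 (m : ℕ) (hm : 2 ≤ m) (r₀ : ℝ) (hr : 0 < r₀)
    (z : ℕ → EuclideanSpace ℝ (Fin 2))
    (hz : ∀ k : ℕ, z k = pt2 (r₀ * cos (π * ((k : ℝ) - 1) / m))
                         (r₀ * sin (π * ((k : ℝ) - 1) / m)))
    (α : ℝ)
    (hα : α = -∑ k ∈ Finset.Icc 2 (2 * m), ((-1 : ℝ)) ^ k / (4 * π * ‖z k - z 1‖)) :
    α ≠ 0 ∧ α < 0 := by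
  have hπ := Real.pi_pos
  have hm0 : (0:ℝ) < (m:ℝ) := by exact_mod_cast Nat.lt_of_lt_of_le Nat.zero_lt_two hm
  set φ : ℕ → ℝ := fun k => π * ((k:ℝ) - 1) / (2*(m:ℝ)) with hφ
  -- positivity of sin on the range
  have hsinpos : ∀ k, 2 ≤ k → k ≤ 2*m → 0 < Real.sin (φ k) := by
    intro k hk2 hk
    have h2k : (2:ℝ) ≤ (k:ℝ) := by exact_mod_cast hk2
    have hk2m : (k:ℝ) ≤ 2*(m:ℝ) := by exact_mod_cast hk
    apply Real.sin_pos_of_pos_of_lt_pi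
    · apply div_pos (by nlinarith) (by positivity)
    · rw [div_lt_iff₀ (by positivity)]
      nlinarith
  -- norm formula
  have hnorm : ∀ k, 2 ≤ k → k ≤ 2*m → ‖z k - z 1‖ = 2*r₀*Real.sin (φ k) := by
    intro k hk2 hk
    have hθ : π * ((k:ℝ)-1)/(m:ℝ) = 2 * φ k := by
      rw [hφ]; field_simp
    have h1 : π * (((1:ℕ):ℝ) - 1)/(m:ℝ) = 0 := by norm_num
    rw [hz k, hz 1, h1, norm_pt2_sub, Real.cos_zero, Real.sin_zero, hθ,
        Real.cos_two_mul, Real.sin_two_mul]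
    have pyth := Real.sin_sq_add_cos_sq (φ k)
    have harg : (r₀ * (2 * Real.cos (φ k)^2 - 1) - r₀ * 1)^2 + (r₀ * (2 * Real.sin (φ k) * Real.cos (φ k)) - r₀ * 0)^2
        = (2*r₀*Real.sin (φ k))^2 := by
      linear_combination (4*r₀^2*(Real.cos (φ k)^2 - 1)) * pyth
    have hs := hsinpos k hk2 hk
    rw [harg, Real.sqrt_sq (by nlinarith)]
  -- rewrite sum in terms of u
  set u : ℕ → ℝ := fun k => 1/(4*π*(2*r₀*Real.sin (φ k))) with hu
  have hupos : ∀ k, 2 ≤ k → k ≤ 2*m → 0 < u k := by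
    intro k hk2 hk
    have := hsinpos k hk2 hk
    rw [hu]; positivity
  have hS : ∑ k ∈ Finset.Icc 2 (2*m), (-1:ℝ)^k/(4*π*‖z k - z 1‖)
      = ∑ k ∈ Finset.Icc 2 (2*m), (-1:ℝ)^k * u k := by
    apply Finset.sum_congr rfl
    intro k hk
    simp only [Finset.mem_Icc] at hk
    rw [hnorm k hk.1 hk.2, hu, div_eq_mul_one_div]
  -- symmetry
  have hsym : ∀ k, 2 ≤ k → k ≤ 2*m → (-1:ℝ)^(2*m+2-k) * u (2*m+2-k) = (-1:ℝ)^k * u k := by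
    intro k hk2 hk
    have hk' : k ≤ 2*m+2 := by omega
    have hcast : ((2*m+2-k : ℕ):ℝ) = 2*(m:ℝ)+2-(k:ℝ) := by
      rw [Nat.cast_sub hk']; push_cast; ring
    have hφsym : φ (2*m+2-k) = π - φ k := by
      rw [hφ]; simp only [hcast]; field_simp; ring
    have husym : u (2*m+2-k) = u k := by
      rw [hu]; simp only [hφsym, Real.sin_pi_sub]
    have hsign : (-1:ℝ)^(2*m+2-k) = (-1:ℝ)^k := by
      have hpar : Even (2*m+2-k) ↔ Even k := by
        rw [Nat.even_sub hk']
        simp [Nat.even_add, parity_simps]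
      rcases Nat.even_or_odd k with he | ho
      · rw [he.neg_one_pow, (hpar.mpr he).neg_one_pow]
      · have ho' : Odd (2*m+2-k) := by
          rw [← Nat.not_even_iff_odd, hpar]
          exact (Nat.not_even_iff_odd).mpr ho
        rw [ho.neg_one_pow, ho'.neg_one_pow]
    rw [hsign, husym]
  -- reindex upper half
  have hre : ∑ k ∈ Finset.Icc (m+2) (2*m), (-1:ℝ)^k * u k
      = ∑ k ∈ Finset.Icc 2 m, (-1:ℝ)^k * u k := by
    apply Finset.sum_nbij' (i := fun k => 2*m+2-k) (j := fun k => 2*m+2-k)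
    · intro a ha; simp only [Finset.mem_Icc] at *; omega
    · intro a ha; simp only [Finset.mem_Icc] at *; omega
    · intro a ha; simp only [Finset.mem_Icc] at ha; omega
    · intro a ha; simp only [Finset.mem_Icc] at ha; omega
    · intro a ha
      simp only [Finset.mem_Icc] at ha
      exact (hsym a (by omega) (by omega)).symm
  -- split
  have hsplit : ∑ k ∈ Finset.Icc 2 (2*m), (-1:ℝ)^k * u k
      = ∑ k ∈ Finset.Icc 2 (m+1), (-1:ℝ)^k * u k
        + ∑ k ∈ Finset.Icc (m+2) (2*m), (-1:ℝ)^k * u k := by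
    rw [← Finset.sum_union (by
      rw [Finset.disjoint_left]
      intro a ha hb
      simp only [Finset.mem_Icc] at ha hb
      omega)]
    apply Finset.sum_congr _ (fun _ _ => rfl)
    ext x
    simp only [Finset.mem_Icc, Finset.mem_union]
    omega
  -- folded form
  set b : ℕ → ℝ := fun k => if k = m+1 then u k else 2 * u k with hb
  have hfold : ∑ k ∈ Finset.Icc 2 (2*m), (-1:ℝ)^k * u k
      = ∑ k ∈ Finset.Icc 2 (m+1), (-1:ℝ)^k * b k := by
    rw [hsplit, hre, Finset.sum_Icc_succ_top (show 2 ≤ m+1 by omega),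
        Finset.sum_Icc_succ_top (show 2 ≤ m+1 by omega)]
    have hbm : b (m+1) = u (m+1) := by rw [hb]; simp
    have hbody : ∑ k ∈ Finset.Icc 2 m, (-1:ℝ)^k * b k
        = ∑ k ∈ Finset.Icc 2 m, ((-1:ℝ)^k * u k + (-1:ℝ)^k * u k) := by
      apply Finset.sum_congr rfl
      intro k hk
      simp only [Finset.mem_Icc] at hk
      rw [hb]
      simp only [show k ≠ m+1 by omega, if_false]
      ring
    rw [hbm, hbody, Finset.sum_add_distrib]
    ring
  -- monotonicity of u
  have hudec : ∀ k, 2 ≤ k → k ≤ m → u (k+1) < u k := by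
    intro k hk2 hkm
    have h2k : (2:ℝ) ≤ (k:ℝ) := by exact_mod_cast hk2
    have hkmR : (k:ℝ) ≤ (m:ℝ) := by exact_mod_cast hkm
    have hmem1 : φ k ∈ Set.Icc (-(π/2)) (π/2) := by
      constructor
      · have : (0:ℝ) ≤ φ k := by
          rw [hφ]; apply div_nonneg (by nlinarith) (by positivity)
        linarith
      · rw [hφ, div_le_iff₀ (by positivity)]; nlinarith
    have hmem2 : φ (k+1) ∈ Set.Icc (-(π/2)) (π/2) := by
      constructor
      · have : (0:ℝ) ≤ φ (k+1) := by
          rw [hφ]; push_cast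
          apply div_nonneg (by nlinarith) (by positivity)
        linarith
      · rw [hφ, div_le_iff₀ (by positivity)]; push_cast; nlinarith
    have hφk : ∀ j : ℕ, φ j = π*((j:ℝ)-1)/(2*(m:ℝ)) := fun _ => rfl
    have hlt : φ k < φ (k+1) := by
      rw [hφk, hφk]
      rw [div_lt_div_iff₀ (by positivity) (by positivity)]
      push_cast
      nlinarith
    have hsinlt : Real.sin (φ k) < Real.sin (φ (k+1)) :=
      Real.strictMonoOn_sin hmem1 hmem2 hlt
    have hs1 : 0 < Real.sin (φ k) := hsinpos k hk2 (by omega)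
    rw [hu]
    apply one_div_lt_one_div_of_lt (by positivity)
    have h8 : (0:ℝ) < 8*π*r₀ := by positivity
    nlinarith [mul_lt_mul_of_pos_left hsinlt h8]
  -- positivity and decrease of b
  have hbpos : ∀ k, 2 ≤ k → k ≤ m+1 → 0 < b k := by
    intro k hk2 hk
    have := hupos k hk2 (by omega)
    simp only [hb]
    split <;> nlinarith
  have hbdec : ∀ k, 2 ≤ k → k + 1 ≤ m+1 → b (k+1) < b k := by
    intro k hk2 hk
    have hud := hudec k hk2 (by omega)
    have hup := hupos k hk2 (by omega)
    have hbk : b k = 2 * u k := by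
      simp only [hb]; rw [if_neg (by omega : ¬ k = m+1)]
    have hbk1 : b (k+1) = u (k+1) ∨ b (k+1) = 2 * u (k+1) := by
      simp only [hb]; split
      · left; rfl
      · right; rfl
    have hup1 : 0 < u (k+1) := hupos (k+1) (by omega) (by omega)
    rcases hbk1 with h | h <;> rw [h, hbk] <;> linarith
  have hSpos : 0 < ∑ k ∈ Finset.Icc 2 (2*m), (-1:ℝ)^k/(4*π*‖z k - z 1‖) := by
    rw [hS, hfold]
    exact alt_aux b (m+1) (by omega) hbpos hbdec
  have hneg : α < 0 := by rw [hα]; linarith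
  exact ⟨ne_of_lt hneg, hneg⟩
end

section
/- Let n = 2, z₁ ≠ z₂ ∈ ℝ³, s = |z₁ - z₂|, and α₁ = α₂ = -1/(4πs). Then the function ψ(x) = -(1/(4π))(1/|x - z₁| - 1/|x - z₂|) is a nonzero element of L²(ℝ³), harmonic on ℝ³ \ {z₁, z₂}, with asymptotics ψ(x) = O(1/|x|²) at infinity, and near each zⱼ satisfies ψ(x) = ψ_{j,-1}/|x - zⱼ| + ψ_{j,0} + O(|x - zⱼ|) with ψ_{j,0} = 4π αⱼ ψ_{j,-1}. -/
open Real MeasureTheory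

noncomputable def laplacian3 (f : EuclideanSpace ℝ (Fin 3) → ℝ)
    (x : EuclideanSpace ℝ (Fin 3)) : ℝ :=
  ∑ i : Fin 3, iteratedFDeriv ℝ 2 f x ![EuclideanSpace.single i 1, EuclideanSpace.single i 1]

namespace Stmt18Aux

noncomputable abbrev E3 := EuclideanSpace ℝ (Fin 3)

noncomputable def qq (p : ℝ) (y : E3) : ℝ := (‖y‖^2) ^ p

noncomputable def innSL : E3 →L[ℝ] E3 →L[ℝ] ℝ := innerSL ℝ

@[simp] lemma innSL_apply (y v : E3) : innSL y v = inner ℝ y v := rfl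

lemma hasFDerivAt_qq (p : ℝ) {y : E3} (hy : y ≠ 0) :
    HasFDerivAt (qq p) ((2 * p * qq (p-1) y) • innSL y) y := by
  have h0 : (0:ℝ) < ‖y‖^2 := by
    have := norm_pos_iff.mpr hy; positivity
  have h1 : HasFDerivAt (fun y : E3 => ‖y‖^2) (2 • (innSL y)) y := by
    simpa [innSL] using (hasFDerivAt_id y).norm_sq
  have h2 := h1.rpow_const (p := p) (Or.inl h0.ne')
  have he : ((p * (‖y‖^2) ^ (p-1)) • ((2:ℕ) • innSL y)) = (2 * p * qq (p-1) y) • innSL y := by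
    ext v
    simp [qq]
    ring
  rw [he] at h2
  exact h2

noncomputable def FF (y : E3) : E3 →L[ℝ] ℝ := (-(qq (-(3:ℝ)/2) y)) • innSL y

noncomputable def GG (y : E3) : E3 →L[ℝ] E3 →L[ℝ] ℝ :=
  (-(qq (-(3:ℝ)/2) y)) • innSL
  + ((3 * qq (-(5:ℝ)/2) y) • innSL y).smulRight (innSL y)

lemma hasFDerivAt_inv_norm {y : E3} (hy : y ≠ 0) :
    HasFDerivAt (fun w : E3 => ‖w‖⁻¹) (FF y) y := by
  have h1 := hasFDerivAt_qq (-(1:ℝ)/2) hy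
  have he : (fun w : E3 => ‖w‖⁻¹) = qq (-(1:ℝ)/2) := by
    funext w
    rcases eq_or_ne w 0 with h | h
    · simp [qq, h, Real.zero_rpow (by norm_num : (-(1:ℝ)/2) ≠ 0)]
    · have hw : (0:ℝ) < ‖w‖ := norm_pos_iff.mpr h
      rw [qq, ← Real.rpow_natCast ‖w‖ 2, ← Real.rpow_mul (norm_nonneg w)]
      norm_num
      rw [Real.rpow_neg_one]
  rw [he]
  have : ((2 * (-(1:ℝ)/2) * qq (-(1:ℝ)/2-1) y) • innSL y) = FF y := by
    rw [FF]
    norm_num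
  rwa [this] at h1

lemma hasFDerivAt_FF {y : E3} (hy : y ≠ 0) : HasFDerivAt FF (GG y) y := by
  have hc : HasFDerivAt (fun w : E3 => -(qq (-(3:ℝ)/2) w))
      ((3 * qq (-(5:ℝ)/2) y) • innSL y) y := by
    have := (hasFDerivAt_qq (-(3:ℝ)/2) hy).neg
    have he : -((2 * (-(3:ℝ)/2) * qq (-(3:ℝ)/2-1) y) • innSL y)
        = (3 * qq (-(5:ℝ)/2) y) • innSL y := by
      rw [show (-(3:ℝ)/2-1) = -(5:ℝ)/2 by norm_num]
      ext v
      simp only [ContinuousLinearMap.neg_apply, ContinuousLinearMap.smul_apply, smul_eq_mul]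
      ring
    rwa [he] at this
  have hf : HasFDerivAt (fun w : E3 => innSL w) innSL y := innSL.hasFDerivAt
  exact hc.smul hf

lemma trace_GG {y : E3} (hy : y ≠ 0) :
    ∑ i : Fin 3, GG y (EuclideanSpace.single i 1) (EuclideanSpace.single i 1) = 0 := by
  have h0 : (0:ℝ) < ‖y‖^2 := by have := norm_pos_iff.mpr hy; positivity
  have hterm : ∀ i : Fin 3, GG y (EuclideanSpace.single i 1) (EuclideanSpace.single i 1)
      = -(qq (-(3:ℝ)/2) y) + 3 * qq (-(5:ℝ)/2) y * (y i * y i) := by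
    intro i
    simp [GG, EuclideanSpace.inner_single_right, EuclideanSpace.inner_single_left,
      real_inner_smul_left]
    ring
  rw [Finset.sum_congr rfl (fun i _ => hterm i), Finset.sum_add_distrib]
  have hsum : ∑ i : Fin 3, 3 * qq (-(5:ℝ)/2) y * (y i * y i)
      = 3 * qq (-(5:ℝ)/2) y * ‖y‖^2 := by
    rw [← Finset.mul_sum]
    congr 1
    rw [EuclideanSpace.norm_eq, Real.sq_sqrt (by positivity)]
    simp [sq]
  rw [hsum]
  have hq : qq (-(5:ℝ)/2) y * ‖y‖^2 = qq (-(3:ℝ)/2) y := by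
    rw [qq, qq]
    nth_rewrite 2 [← Real.rpow_one (‖y‖^2)]
    rw [← Real.rpow_add h0]
    norm_num
  rw [mul_assoc, hq]
  simp

lemma hasFDerivAt_inv_norm_sub {z x : E3} (h : x ≠ z) :
    HasFDerivAt (fun w : E3 => ‖w - z‖⁻¹) (FF (x - z)) x := by
  have := (hasFDerivAt_inv_norm (sub_ne_zero.2 h)).comp x ((hasFDerivAt_id x).sub_const z)
  exact this

lemma hasFDerivAt_FF_sub {z x : E3} (h : x ≠ z) :
    HasFDerivAt (fun w : E3 => FF (w - z)) (GG (x - z)) x := by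
  have := (hasFDerivAt_FF (sub_ne_zero.2 h)).comp x ((hasFDerivAt_id x).sub_const z)
  exact this

lemma hasFDerivAt_psi (z₁ z₂ : E3) (c : ℝ) {x : E3} (h1 : x ≠ z₁) (h2 : x ≠ z₂) :
    HasFDerivAt (fun x => c * (‖x - z₁‖⁻¹ - ‖x - z₂‖⁻¹))
      (c • (FF (x - z₁) - FF (x - z₂))) x :=
  ((hasFDerivAt_inv_norm_sub h1).sub (hasFDerivAt_inv_norm_sub h2)).const_mul c

lemma hasFDerivAt_psi' (z₁ z₂ : E3) (c : ℝ) {x : E3} (h1 : x ≠ z₁) (h2 : x ≠ z₂) :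
    HasFDerivAt (fun x => c • (FF (x - z₁) - FF (x - z₂)))
      (c • (GG (x - z₁) - GG (x - z₂))) x :=
  ((hasFDerivAt_FF_sub h1).sub (hasFDerivAt_FF_sub h2)).const_smul c

lemma laplacian_psi (z₁ z₂ : E3) (c : ℝ) (ψ : E3 → ℝ)
    (hψ : ψ = fun x => c * (‖x - z₁‖⁻¹ - ‖x - z₂‖⁻¹))
    {x : E3} (h1 : x ≠ z₁) (h2 : x ≠ z₂) : laplacian3 ψ x = 0 := by
  have hU : IsOpen {x : E3 | x ≠ z₁ ∧ x ≠ z₂} :=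
    (isOpen_compl_singleton.inter isOpen_compl_singleton)
  have hx : x ∈ {x : E3 | x ≠ z₁ ∧ x ≠ z₂} := ⟨h1, h2⟩
  have heq : fderiv ℝ ψ =ᶠ[nhds x] (fun x => c • (FF (x - z₁) - FF (x - z₂))) := by
    filter_upwards [hU.mem_nhds hx] with x' hx'
    exact (hψ ▸ hasFDerivAt_psi z₁ z₂ c hx'.1 hx'.2).fderiv
  have h2nd : fderiv ℝ (fderiv ℝ ψ) x = c • (GG (x - z₁) - GG (x - z₂)) := by
    rw [heq.fderiv_eq]
    exact (hasFDerivAt_psi' z₁ z₂ c h1 h2).fderiv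
  unfold laplacian3
  have hterm : ∀ i : Fin 3,
      iteratedFDeriv ℝ 2 ψ x ![EuclideanSpace.single i 1, EuclideanSpace.single i 1]
      = c * (GG (x - z₁) (EuclideanSpace.single i 1) (EuclideanSpace.single i 1)
          - GG (x - z₂) (EuclideanSpace.single i 1) (EuclideanSpace.single i 1)) := by
    intro i
    rw [iteratedFDeriv_two_apply, h2nd]
    simp
  rw [Finset.sum_congr rfl (fun i _ => hterm i), ← Finset.mul_sum]
  rw [Finset.sum_sub_distrib, trace_GG (sub_ne_zero.2 h1), trace_GG (sub_ne_zero.2 h2)]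
  simp

lemma contDiffOn_psi (z₁ z₂ : E3) (c : ℝ) (ψ : E3 → ℝ)
    (hψ : ψ = fun x => c * (‖x - z₁‖⁻¹ - ‖x - z₂‖⁻¹)) :
    ContDiffOn ℝ 2 ψ {x : E3 | x ≠ z₁ ∧ x ≠ z₂} := by
  rintro x ⟨h1, h2⟩
  apply ContDiffAt.contDiffWithinAt
  rw [hψ]
  have n1 : ContDiffAt ℝ 2 (fun w : E3 => ‖w - z₁‖) x :=
    ContDiffAt.norm ℝ (contDiffAt_id.sub contDiffAt_const) (sub_ne_zero.2 h1)
  have n2 : ContDiffAt ℝ 2 (fun w : E3 => ‖w - z₂‖) x :=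
    ContDiffAt.norm ℝ (contDiffAt_id.sub contDiffAt_const) (sub_ne_zero.2 h2)
  exact contDiffAt_const.mul
    ((n1.inv (norm_ne_zero_iff.2 (sub_ne_zero.2 h1))).sub
     (n2.inv (norm_ne_zero_iff.2 (sub_ne_zero.2 h2))))

open Metric in
lemma integrableOn_inv_norm_sq (z : E3) (ρ : ℝ) :
    IntegrableOn (fun x : E3 => (‖x - z‖^2)⁻¹) (ball z ρ) volume := by
  have hc : Continuous fun x : E3 => ‖x - z‖^2 := ((continuous_id.sub continuous_const).norm).pow 2
  have hm : Measurable fun x : E3 => (‖x - z‖^2)⁻¹ := hc.measurable.inv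
  refine ⟨hm.aestronglyMeasurable, ?_⟩
  rw [hasFiniteIntegral_iff_norm]
  have hcong : ∫⁻ a in ball z ρ, ENNReal.ofReal ‖(‖a - z‖^2)⁻¹‖
      = ∫⁻ a in ball z ρ, ENNReal.ofReal ((‖a - z‖^2)⁻¹) := by
    apply lintegral_congr
    intro a
    rw [Real.norm_eq_abs, abs_of_nonneg (by positivity)]
  rw [hcong, lintegral_eq_lintegral_meas_lt _ (Filter.Eventually.of_forall fun a => by positivity)
    hm.aemeasurable]
  rw [← Set.Ioc_union_Ioi_eq_Ioi (zero_le_one' ℝ)]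
  refine lt_of_le_of_lt (lintegral_union_le _ _ _) ?_
  rw [ENNReal.add_lt_top]
  constructor
  · calc ∫⁻ t in Set.Ioc (0:ℝ) 1, (volume.restrict (ball z ρ)) {a | t < (‖a - z‖^2)⁻¹}
        ≤ ∫⁻ _t in Set.Ioc (0:ℝ) 1, volume (ball z ρ) := by
          apply lintegral_mono
          intro t
          exact le_trans (measure_mono (Set.subset_univ _))
            (le_of_eq (by rw [Measure.restrict_apply_univ]))
      _ = volume (ball z ρ) * volume (Set.Ioc (0:ℝ) 1) := setLIntegral_const _ _
      _ < ⊤ := ENNReal.mul_lt_top measure_ball_lt_top (by simp [Real.volume_Ioc])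
  · have hVne : volume (ball (0:E3) 1) ≠ ⊤ := measure_ball_lt_top.ne
    have key : ∀ t ∈ Set.Ioi (1:ℝ), (volume.restrict (ball z ρ)) {a | t < (‖a - z‖^2)⁻¹}
        ≤ ENNReal.ofReal (t ^ (-(3:ℝ)/2)) * volume (ball (0:E3) 1) := by
      intro t ht
      have ht0 : (0:ℝ) < t := lt_trans zero_lt_one ht
      have hsub : {a : E3 | t < (‖a - z‖^2)⁻¹} ⊆ ball z (Real.sqrt t⁻¹) := by
        intro a ha
        simp only [Set.mem_setOf_eq] at ha
        have hd2 : ‖a - z‖^2 < t⁻¹ := by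
          rcases eq_or_lt_of_le (sq_nonneg ‖a - z‖) with h | h
          · rw [← h]; positivity
          · nlinarith [mul_inv_cancel₀ (ne_of_gt h), mul_inv_cancel₀ (ne_of_gt ht0)]
        rw [mem_ball, dist_eq_norm]
        exact (Real.lt_sqrt (norm_nonneg _)).mpr hd2
      calc (volume.restrict (ball z ρ)) {a | t < (‖a - z‖^2)⁻¹}
          ≤ volume {a : E3 | t < (‖a - z‖^2)⁻¹} := Measure.restrict_le_self _
        _ ≤ volume (ball z (Real.sqrt t⁻¹)) := measure_mono hsub
        _ = ENNReal.ofReal (Real.sqrt t⁻¹ ^ (Module.finrank ℝ E3)) * volume (ball (0:E3) 1) :=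
            Measure.addHaar_ball _ _ (Real.sqrt_nonneg _)
        _ = ENNReal.ofReal (t ^ (-(3:ℝ)/2)) * volume (ball (0:E3) 1) := by
            congr 2
            have h3 : Module.finrank ℝ E3 = 3 := finrank_euclideanSpace_fin
            rw [h3, Real.sqrt_eq_rpow, ← Real.rpow_natCast (t⁻¹ ^ ((1:ℝ)/2)) 3,
              ← Real.rpow_mul (by positivity), ← Real.rpow_neg_one t,
              ← Real.rpow_mul ht0.le]
            norm_num
    calc ∫⁻ t in Set.Ioi (1:ℝ), (volume.restrict (ball z ρ)) {a | t < (‖a - z‖^2)⁻¹}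
        ≤ ∫⁻ t in Set.Ioi (1:ℝ), ENNReal.ofReal (t ^ (-(3:ℝ)/2)) * volume (ball (0:E3) 1) :=
          setLIntegral_mono ((ENNReal.measurable_ofReal.comp
            (measurable_id.pow_const _)).mul_const _) key
      _ = (∫⁻ t in Set.Ioi (1:ℝ), ENNReal.ofReal (t ^ (-(3:ℝ)/2))) * volume (ball (0:E3) 1) :=
          lintegral_mul_const _ (ENNReal.measurable_ofReal.comp (measurable_id.pow_const _))
      _ < ⊤ := by
          refine ENNReal.mul_lt_top ?_ hVne.lt_top
          have hint : IntegrableOn (fun t : ℝ => t ^ (-(3:ℝ)/2)) (Set.Ioi 1) volume :=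
            integrableOn_Ioi_rpow_of_lt (by norm_num) zero_lt_one
          rw [← ofReal_integral_eq_lintegral_ofReal hint ?_]
          · exact ENNReal.ofReal_lt_top
          · filter_upwards [ae_restrict_mem measurableSet_Ioi] with t ht
            exact Real.rpow_nonneg (le_of_lt (lt_trans zero_lt_one ht)) _

lemma near_bound {a s' b : ℝ} (hs : 0 < s') (ha : s'/2 ≤ a) (hab : |a - s'| ≤ b) :
    |1/a - 1/s'| ≤ (2/s'^2) * b := by
  have ha0 : 0 < a := by linarith
  have hb0 : (0:ℝ) ≤ b := le_trans (abs_nonneg _) hab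
  rw [div_sub_div _ _ ha0.ne' hs.ne', one_mul, mul_one, abs_div,
    abs_of_pos (by positivity : (0:ℝ) < a * s')]
  calc |s' - a| / (a * s') ≤ b / (s'^2/2) := by
        apply div_le_div₀ hb0 _ (by positivity) (by nlinarith)
        rw [abs_sub_comm]
        exact hab
    _ = (2/s'^2) * b := by field_simp
end Stmt18Aux

open Stmt18Aux Metric in
/-- the two-point scatterer with α₁ = α₂ = -1/(4πs), s = |z₁-z₂|, has the
zero-energy bound state ψ(x) = -(1/(4π))(1/|x-z₁| - 1/|x-z₂|): it is a nonzero L²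
function, harmonic off {z₁, z₂}, O(1/|x|²) at infinity, and near zⱼ satisfies the
contact condition with ψ_{1,-1} = -1/(4π), ψ_{2,-1} = 1/(4π), ψ_{j,0} = 4παψ_{j,-1}. -/
theorem stmt18 (z₁ z₂ : EuclideanSpace ℝ (Fin 3)) (hz : z₁ ≠ z₂)
    (s : ℝ) (hs : s = ‖z₁ - z₂‖) (α : ℝ) (hα : α = -1 / (4 * π * s))
    (ψ : EuclideanSpace ℝ (Fin 3) → ℝ)
    (hψ : ∀ x, ψ x = -(1 / (4 * π)) * (1 / ‖x - z₁‖ - 1 / ‖x - z₂‖)) :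
    (∃ x, ψ x ≠ 0) ∧
    MemLp ψ 2 (volume : Measure (EuclideanSpace ℝ (Fin 3))) ∧
    (ContDiffOn ℝ 2 ψ {x | x ≠ z₁ ∧ x ≠ z₂} ∧
      ∀ x, x ≠ z₁ → x ≠ z₂ → laplacian3 ψ x = 0) ∧
    (∃ C R : ℝ, ∀ x : EuclideanSpace ℝ (Fin 3), R ≤ ‖x‖ → |ψ x| ≤ C / ‖x‖ ^ 2) ∧
    (∃ C ε : ℝ, 0 < ε ∧ ∀ x, x ≠ z₁ → ‖x - z₁‖ < ε →
      |ψ x - ((-1 / (4 * π)) / ‖x - z₁‖ + 4 * π * α * (-1 / (4 * π)))|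
        ≤ C * ‖x - z₁‖) ∧
    (∃ C ε : ℝ, 0 < ε ∧ ∀ x, x ≠ z₂ → ‖x - z₂‖ < ε →
      |ψ x - ((1 / (4 * π)) / ‖x - z₂‖ + 4 * π * α * (1 / (4 * π)))|
        ≤ C * ‖x - z₂‖) := by
  have hπ : (0:ℝ) < π := Real.pi_pos
  have hspos : 0 < s := by
    rw [hs]; exact norm_pos_iff.mpr (sub_ne_zero.2 hz)
  have hψ' : ψ = fun x => -(1/(4*π)) * (‖x - z₁‖⁻¹ - ‖x - z₂‖⁻¹) := by
    funext x; rw [hψ x]; ring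
  -- far-field bound
  have hfar : ∀ x : E3, 2*(‖z₁‖+‖z₂‖)+1 ≤ ‖x‖ → |ψ x| ≤ (s/π) / ‖x‖^2 := by
    intro x hx
    have hn1 : (0:ℝ) ≤ ‖z₁‖ := norm_nonneg _
    have hn2 : (0:ℝ) ≤ ‖z₂‖ := norm_nonneg _
    have hx0 : (0:ℝ) < ‖x‖ := by linarith
    have ha : ‖x‖/2 ≤ ‖x - z₁‖ := by
      have h1 : ‖x‖ - ‖z₁‖ ≤ ‖x - z₁‖ := norm_sub_norm_le x z₁
      linarith
    have hb : ‖x‖/2 ≤ ‖x - z₂‖ := by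
      have h1 : ‖x‖ - ‖z₂‖ ≤ ‖x - z₂‖ := norm_sub_norm_le x z₂
      linarith
    have ha0 : 0 < ‖x - z₁‖ := by linarith
    have hb0 : 0 < ‖x - z₂‖ := by linarith
    have habs : |‖x - z₂‖ - ‖x - z₁‖| ≤ s := by
      have h := abs_norm_sub_norm_le (x - z₂) (x - z₁)
      rw [show (x - z₂) - (x - z₁) = z₁ - z₂ from by abel] at h
      rw [hs]; exact h
    have hdiff : 1/‖x - z₁‖ - 1/‖x - z₂‖
        = (‖x - z₂‖ - ‖x - z₁‖)/(‖x - z₁‖ * ‖x - z₂‖) := by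
      rw [div_sub_div _ _ ha0.ne' hb0.ne', one_mul, mul_one]
    have habsψ : |ψ x| = (1/(4*π)) * |1/‖x - z₁‖ - 1/‖x - z₂‖| := by
      rw [hψ x, abs_mul, abs_neg, abs_of_pos (by positivity : (0:ℝ) < 1/(4*π))]
    rw [habsψ, hdiff, abs_div, abs_of_pos (by positivity : (0:ℝ) < ‖x - z₁‖ * ‖x - z₂‖)]
    calc (1/(4*π)) * (|‖x - z₂‖ - ‖x - z₁‖| / (‖x - z₁‖ * ‖x - z₂‖))
        ≤ (1/(4*π)) * (s / ((‖x‖/2)*(‖x‖/2))) := by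
          apply mul_le_mul_of_nonneg_left _ (by positivity)
          exact div_le_div₀ hspos.le habs (by positivity)
            (mul_le_mul ha hb (by linarith) (le_of_lt ha0))
      _ = (s/π) / ‖x‖^2 := by field_simp; ring
  -- measurability
  have hmble : Measurable ψ := by
    rw [hψ']
    have m1 : Measurable fun x : E3 => ‖x - z₁‖⁻¹ :=
      ((continuous_id.sub continuous_const).norm).measurable.inv
    have m2 : Measurable fun x : E3 => ‖x - z₂‖⁻¹ :=
      ((continuous_id.sub continuous_const).norm).measurable.inv
    exact (m1.sub m2).const_mul _
  -- Memℒp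
  have hmem : MemLp ψ 2 (volume : Measure E3) := by
    refine (memLp_two_iff_integrable_sq hmble.aestronglyMeasurable).2 ?_
    rw [← integrableOn_univ, ← Set.union_compl_self (ball (0:E3) (max (2*(‖z₁‖+‖z₂‖)+1) 1))]
    refine IntegrableOn.union ?_ ?_
    · -- near part
      have hsub1 : ball (0:E3) (max (2*(‖z₁‖+‖z₂‖)+1) 1)
          ⊆ ball z₁ (max (2*(‖z₁‖+‖z₂‖)+1) 1 + ‖z₁‖) := by
        intro x hx
        rw [mem_ball] at hx ⊢
        have h := dist_triangle x 0 z₁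
        have h0 : dist (0:E3) z₁ = ‖z₁‖ := by simp
        linarith
      have hsub2 : ball (0:E3) (max (2*(‖z₁‖+‖z₂‖)+1) 1)
          ⊆ ball z₂ (max (2*(‖z₁‖+‖z₂‖)+1) 1 + ‖z₂‖) := by
        intro x hx
        rw [mem_ball] at hx ⊢
        have h := dist_triangle x 0 z₂
        have h0 : dist (0:E3) z₂ = ‖z₂‖ := by simp
        linarith
      have I1 := (integrableOn_inv_norm_sq z₁ (max (2*(‖z₁‖+‖z₂‖)+1) 1 + ‖z₁‖)).mono_set hsub1
      have I2 := (integrableOn_inv_norm_sq z₂ (max (2*(‖z₁‖+‖z₂‖)+1) 1 + ‖z₂‖)).mono_set hsub2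
      have Ig : IntegrableOn
          (fun x : E3 => (2*(1/(4*π))^2) * ((‖x - z₁‖^2)⁻¹ + (‖x - z₂‖^2)⁻¹))
          (ball (0:E3) (max (2*(‖z₁‖+‖z₂‖)+1) 1)) volume := (I1.add I2).const_mul _
      refine Integrable.mono' Ig ((hmble.pow_const 2).aestronglyMeasurable) ?_
      apply Filter.Eventually.of_forall
      intro x
      rw [Real.norm_eq_abs, abs_of_nonneg (sq_nonneg _), hψ x]
      have ha0 : (0:ℝ) ≤ ‖x - z₁‖ := norm_nonneg _
      have hb0 : (0:ℝ) ≤ ‖x - z₂‖ := norm_nonneg _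
      have e1 : (1/‖x - z₁‖)^2 = (‖x - z₁‖^2)⁻¹ := by
        rw [div_pow, one_pow, one_div]
      have e2 : (1/‖x - z₂‖)^2 = (‖x - z₂‖^2)⁻¹ := by
        rw [div_pow, one_pow, one_div]
      have h2 : (1/‖x - z₁‖ - 1/‖x - z₂‖)^2 ≤ 2*((‖x - z₁‖^2)⁻¹ + (‖x - z₂‖^2)⁻¹) := by
        nlinarith [sq_nonneg (1/‖x - z₁‖ + 1/‖x - z₂‖), e1, e2]
      calc (-(1/(4*π)) * (1/‖x - z₁‖ - 1/‖x - z₂‖))^2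
          = (1/(4*π))^2 * (1/‖x - z₁‖ - 1/‖x - z₂‖)^2 := by ring
        _ ≤ (1/(4*π))^2 * (2*((‖x - z₁‖^2)⁻¹ + (‖x - z₂‖^2)⁻¹)) :=
            mul_le_mul_of_nonneg_left h2 (sq_nonneg _)
        _ = (2*(1/(4*π))^2) * ((‖x - z₁‖^2)⁻¹ + (‖x - z₂‖^2)⁻¹) := by ring
    · -- far part
      have hint4 : Integrable (fun x : E3 => (16*(s/π)^2) * (1+‖x‖) ^ (-(4:ℝ))) volume := by
        apply Integrable.const_mul
        apply integrable_one_add_norm (E := E3)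
        simp only [finrank_euclideanSpace_fin]
        norm_num
      refine Integrable.mono' hint4.integrableOn ((hmble.pow_const 2).aestronglyMeasurable) ?_
      rw [ae_restrict_iff' measurableSet_ball.compl]
      apply Filter.Eventually.of_forall
      intro x hx
      have hxR : max (2*(‖z₁‖+‖z₂‖)+1) 1 ≤ ‖x‖ := by
        simp only [Set.mem_compl_iff, mem_ball, not_lt, dist_zero_right] at hx
        exact hx
      have ht1 : (1:ℝ) ≤ ‖x‖ := le_trans (le_max_right _ _) hxR
      have hfx := hfar x (le_trans (le_max_left _ _) hxR)
      have hC0 : (0:ℝ) ≤ s/π := by positivity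
      rw [Real.norm_eq_abs, abs_of_nonneg (sq_nonneg _)]
      have h1 : ψ x^2 ≤ ((s/π)/‖x‖^2)^2 := by
        rw [← sq_abs]
        exact pow_le_pow_left₀ (abs_nonneg _) hfx 2
      have h16 : (1+‖x‖)^(4:ℕ) ≤ 16*‖x‖^(4:ℕ) := by
        have h := pow_le_pow_left₀ (by linarith : (0:ℝ) ≤ 1+‖x‖)
          (by linarith : 1+‖x‖ ≤ 2*‖x‖) 4
        calc (1+‖x‖)^(4:ℕ) ≤ (2*‖x‖)^(4:ℕ) := h
          _ = 16*‖x‖^(4:ℕ) := by ring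
      have hrp : (1+‖x‖) ^ (-(4:ℝ)) = ((1+‖x‖)^(4:ℕ))⁻¹ := by
        rw [← Real.rpow_natCast (1+‖x‖) 4, ← Real.rpow_neg (by positivity)]
        norm_num
      calc ψ x^2 ≤ ((s/π)/‖x‖^2)^2 := h1
        _ = (s/π)^2/‖x‖^(4:ℕ) := by rw [div_pow]; norm_num; ring
        _ ≤ (16*(s/π)^2) * ((1+‖x‖)^(4:ℕ))⁻¹ := by
            rw [← div_eq_mul_inv]
            rw [div_le_div_iff₀ (by positivity) (by positivity)]
            nlinarith [mul_le_mul_of_nonneg_left h16 (sq_nonneg (s/π))]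
        _ = (16*(s/π)^2) * (1+‖x‖) ^ (-(4:ℝ)) := by rw [hrp]
  refine ⟨?_, hmem, ⟨contDiffOn_psi z₁ z₂ _ ψ hψ',
    fun x h1 h2 => laplacian_psi z₁ z₂ _ ψ hψ' h1 h2⟩,
    ⟨s/π, 2*(‖z₁‖+‖z₂‖)+1, hfar⟩, ?_, ?_⟩
  · -- nonzero
    refine ⟨z₁, ?_⟩
    rw [hψ z₁, sub_self, norm_zero, div_zero, zero_sub, neg_mul_neg]
    have hz0 : (0:ℝ) < ‖z₁ - z₂‖ := hs ▸ hspos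
    positivity
  · -- near z₁
    refine ⟨(1/(4*π)) * (2/s^2), s/2, by positivity, ?_⟩
    intro x hx1 hxe
    have hval : 4*π*α*(-1/(4*π)) = 1/(4*π) * (1/s) := by
      rw [hα]; field_simp
    have hab : |‖x - z₂‖ - s| ≤ ‖x - z₁‖ := by
      have h := abs_norm_sub_norm_le (x - z₂) (z₁ - z₂)
      rw [show (x - z₂) - (z₁ - z₂) = x - z₁ from by abel] at h
      rw [hs]; exact h
    have hb2 : s/2 ≤ ‖x - z₂‖ := by
      have h := abs_le.1 hab
      linarith [h.1]
    have key : ψ x - ((-1/(4*π))/‖x - z₁‖ + 4*π*α*(-1/(4*π)))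
        = (1/(4*π)) * (1/‖x - z₂‖ - 1/s) := by
      rw [hψ x, hval]; ring
    rw [key, abs_mul, abs_of_pos (show (0:ℝ) < 1/(4*π) by positivity)]
    calc (1/(4*π)) * |1/‖x - z₂‖ - 1/s|
        ≤ (1/(4*π)) * ((2/s^2) * ‖x - z₁‖) :=
          mul_le_mul_of_nonneg_left (near_bound hspos hb2 hab) (by positivity)
      _ = (1/(4*π)) * (2/s^2) * ‖x - z₁‖ := by ring
  · -- near z₂
    refine ⟨(1/(4*π)) * (2/s^2), s/2, by positivity, ?_⟩
    intro x hx2 hxe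
    have hval : 4*π*α*(1/(4*π)) = -(1/(4*π) * (1/s)) := by
      rw [hα]; field_simp
    have hab : |‖x - z₁‖ - s| ≤ ‖x - z₂‖ := by
      have h := abs_norm_sub_norm_le (x - z₁) (z₂ - z₁)
      rw [show (x - z₁) - (z₂ - z₁) = x - z₂ from by abel] at h
      rw [hs, norm_sub_rev z₁ z₂]; exact h
    have ha2 : s/2 ≤ ‖x - z₁‖ := by
      have h := abs_le.1 hab
      linarith [h.1]
    have key : ψ x - ((1/(4*π))/‖x - z₂‖ + 4*π*α*(1/(4*π)))
        = -((1/(4*π)) * (1/‖x - z₁‖ - 1/s)) := by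
      rw [hψ x, hval]; ring
    rw [key, abs_neg, abs_mul, abs_of_pos (show (0:ℝ) < 1/(4*π) by positivity)]
    calc (1/(4*π)) * |1/‖x - z₁‖ - 1/s|
        ≤ (1/(4*π)) * ((2/s^2) * ‖x - z₂‖) :=
          mul_le_mul_of_nonneg_left (near_bound hspos ha2 hab) (by positivity)
      _ = (1/(4*π)) * (2/s^2) * ‖x - z₂‖ := by ring
end

section
/- Let z₁, …, zₙ ∈ ℝ³ be distinct and q ∈ ℝⁿ with ∑ⱼ qⱼ ≠ 0. Then ψ(x) = -(1/(4π)) ∑ⱼ qⱼ/|x - zⱼ| is not in L²(ℝ³). -/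
open Real MeasureTheory

set_option maxHeartbeats 2000000 in
/-- if the total charge does not vanish, the sum of Newtonian potentials
is not in L²(ℝ³). -/
theorem stmt19 (n : ℕ) (z : Fin n → EuclideanSpace ℝ (Fin 3)) (q : Fin n → ℝ)
    (hz : Function.Injective z) (hq : ∑ j, q j ≠ 0) :
    ¬ MemLp (fun x : EuclideanSpace ℝ (Fin 3) => -(1 / (4 * π)) * ∑ j, q j / ‖x - z j‖)
      2 (volume : Measure (EuclideanSpace ℝ (Fin 3))) := by
  intro h
  set f : EuclideanSpace ℝ (Fin 3) → ℝ :=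
    fun x => -(1 / (4 * π)) * ∑ j, q j / ‖x - z j‖ with hf
  set Q := ∑ j, q j with hQ
  set M := ∑ j, ‖z j‖ with hM
  set S := ∑ j, |q j| * ‖z j‖ with hS
  have hM0 : 0 ≤ M := Finset.sum_nonneg fun j _ => norm_nonneg _
  have hS0 : 0 ≤ S := Finset.sum_nonneg fun j _ => mul_nonneg (abs_nonneg _) (norm_nonneg _)
  have hQ0 : 0 < |Q| := abs_pos.2 hq
  have hπ : 0 < π := Real.pi_pos
  set R := max (2 * M + 1) (4 * S / |Q|) with hR
  have hR1 : 1 ≤ R := le_max_of_le_left (by linarith)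
  have hR0 : 0 < R := lt_of_lt_of_le one_pos hR1
  set c₀ := |Q| / (8 * π) with hc0
  have hc0p : 0 < c₀ := div_pos hQ0 (by positivity)
  -- pointwise lower bound away from the charges
  have key : ∀ x : EuclideanSpace ℝ (Fin 3), R ≤ ‖x‖ → c₀ / ‖x‖ ≤ |f x| := by
    intro x hx
    have hx0 : 0 < ‖x‖ := lt_of_lt_of_le (lt_of_lt_of_le one_pos hR1) hx
    have hxM : 2 * M + 1 ≤ ‖x‖ := le_trans (le_max_left _ _) hx
    have hxS : 4 * S / |Q| ≤ ‖x‖ := le_trans (le_max_right _ _) hx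
    have hj : ∀ j, ‖x‖ / 2 ≤ ‖x - z j‖ := by
      intro j
      have h1 : ‖z j‖ ≤ M :=
        Finset.single_le_sum (f := fun i => ‖z i‖) (fun i _ => norm_nonneg (z i))
          (Finset.mem_univ j)
      have h2 : ‖x‖ - ‖x - z j‖ ≤ ‖x - (x - z j)‖ := norm_sub_norm_le x (x - z j)
      rw [sub_sub_cancel] at h2
      linarith
    have herr : |(∑ j, q j / ‖x - z j‖) - Q / ‖x‖| ≤ 2 * S / ‖x‖ ^ 2 := by
      have e1 : (∑ j, q j / ‖x - z j‖) - Q / ‖x‖ = ∑ j, (q j / ‖x - z j‖ - q j / ‖x‖) := by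
        rw [hQ, Finset.sum_div, Finset.sum_sub_distrib]
      rw [e1]
      refine le_trans (Finset.abs_sum_le_sum_abs _ _) ?_
      have e2 : ∀ j ∈ Finset.univ, |q j / ‖x - z j‖ - q j / ‖x‖| ≤
          |q j| * ‖z j‖ * (2 / ‖x‖ ^ 2) := by
        intro j _
        have haj : 0 < ‖x - z j‖ := lt_of_lt_of_le (by positivity) (hj j)
        have hzb : |‖x‖ - ‖x - z j‖| ≤ ‖z j‖ := by
          have := abs_norm_sub_norm_le x (x - z j)
          rwa [sub_sub_cancel] at this
        have e3 : q j / ‖x - z j‖ - q j / ‖x‖ =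
            (q j * (‖x‖ - ‖x - z j‖)) / (‖x - z j‖ * ‖x‖) := by
          field_simp
        rw [e3, abs_div, abs_mul]
        have hden : |‖x - z j‖ * ‖x‖| = ‖x - z j‖ * ‖x‖ :=
          abs_of_pos (by positivity)
        rw [hden]
        rw [div_le_iff₀ (by positivity)]
        have hb1 : |q j| * |‖x‖ - ‖x - z j‖| ≤ |q j| * ‖z j‖ :=
          mul_le_mul_of_nonneg_left hzb (abs_nonneg _)
        have hb2 : |q j| * ‖z j‖ ≤ |q j| * ‖z j‖ * (2 / ‖x‖ ^ 2) * (‖x - z j‖ * ‖x‖) := by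
          have h4 : ‖x‖ ^ 2 / 2 ≤ ‖x - z j‖ * ‖x‖ := by
            have := hj j
            nlinarith
          have h5 : (1 : ℝ) ≤ (2 / ‖x‖ ^ 2) * (‖x - z j‖ * ‖x‖) := by
            rw [div_mul_eq_mul_div, le_div_iff₀ (by positivity)]
            nlinarith
          nlinarith [mul_nonneg (abs_nonneg (q j)) (norm_nonneg (z j))]
        calc |q j| * |‖x‖ - ‖x - z j‖| ≤ |q j| * ‖z j‖ := hb1
          _ ≤ _ := hb2
      refine le_trans (Finset.sum_le_sum e2) ?_
      rw [← Finset.sum_mul, ← hS]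
      exact le_of_eq (by ring)
    have herr2 : 2 * S / ‖x‖ ^ 2 ≤ |Q| / (2 * ‖x‖) := by
      rw [div_le_div_iff₀ (by positivity) (by positivity)]
      rw [div_le_iff₀ hQ0] at hxS
      nlinarith
    have hsum : |Q| / (2 * ‖x‖) ≤ |∑ j, q j / ‖x - z j‖| := by
      have h6 : |Q / ‖x‖| - |(∑ j, q j / ‖x - z j‖)| ≤
          |Q / ‖x‖ - (∑ j, q j / ‖x - z j‖)| := abs_sub_abs_le_abs_sub _ _
      rw [abs_sub_comm] at h6
      have h7 : |Q / ‖x‖| = |Q| / ‖x‖ := by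
        rw [abs_div, abs_of_pos hx0]
      have h8 : |Q| / (2 * ‖x‖) * 2 = |Q| / ‖x‖ := by
        field_simp
      linarith
    -- conclude
    have h9 : |f x| = 1 / (4 * π) * |∑ j, q j / ‖x - z j‖| := by
      rw [hf]
      rw [abs_mul, abs_neg, abs_of_pos (by positivity : (0:ℝ) < 1 / (4 * π))]
    rw [h9]
    have h10 : c₀ / ‖x‖ = 1 / (4 * π) * (|Q| / (2 * ‖x‖)) := by
      rw [hc0]
      field_simp
      ring_nf
    rw [h10]
    exact mul_le_mul_of_nonneg_left hsum (by positivity)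
  -- the L² norm is infinite
  have h2 := h.2
  rw [eLpNorm_lt_top_iff_lintegral_rpow_enorm_lt_top two_ne_zero ENNReal.ofNat_ne_top] at h2
  simp only [ENNReal.toReal_ofNat, enorm_eq_nnnorm] at h2
  set I := ∫⁻ a, (‖f a‖₊ : ENNReal) ^ (2 : ℝ) with hI
  set vB := volume (Metric.ball (0 : EuclideanSpace ℝ (Fin 3)) 1) with hvB
  have hvB0 : 0 < vB := Metric.measure_ball_pos _ _ one_pos
  have hvBt : vB ≠ ⊤ := measure_ball_lt_top.ne
  have main : ∀ k : ℕ, ENNReal.ofReal (c₀ ^ 2 * R * 2 ^ k) * vB ≤ I := by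
    intro k
    set r₁ := R * 2 ^ k with hr₁
    set r₂ := R * 2 ^ (k + 1) with hr₂
    have hr₁0 : 0 < r₁ := by positivity
    have hr₂0 : 0 < r₂ := by positivity
    have hlt : r₁ < r₂ := by
      rw [hr₁, hr₂]
      exact mul_lt_mul_of_pos_left
        (pow_lt_pow_right₀ (by norm_num) (Nat.lt_succ_self k)) hR0
    set A := Metric.ball (0 : EuclideanSpace ℝ (Fin 3)) r₂ \
      Metric.ball (0 : EuclideanSpace ℝ (Fin 3)) r₁ with hA
    have hAm : MeasurableSet A := measurableSet_ball.diff measurableSet_ball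
    have hvol : volume A = ENNReal.ofReal (r₂ ^ 3 - r₁ ^ 3) * vB := by
      rw [hA, measure_diff (Metric.ball_subset_ball hlt.le)
        measurableSet_ball.nullMeasurableSet measure_ball_lt_top.ne]
      rw [Measure.addHaar_ball volume _ hr₁0.le, Measure.addHaar_ball volume _ hr₂0.le]
      rw [finrank_euclideanSpace_fin]
      rw [ENNReal.ofReal_sub _ (by positivity)]
      rw [ENNReal.sub_mul (fun _ _ => hvBt)]
    -- pointwise bound via indicator
    have hpoint : ∀ x, A.indicator (fun _ => ENNReal.ofReal ((c₀ / r₂) ^ (2:ℝ))) x ≤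
        (‖f x‖₊ : ENNReal) ^ (2 : ℝ) := by
      intro x
      by_cases hx : x ∈ A
      · rw [Set.indicator_of_mem hx]
        obtain ⟨hx2, hx1⟩ := hx
        rw [Metric.mem_ball, dist_zero_right] at hx2
        rw [Metric.mem_ball, dist_zero_right, not_lt] at hx1
        have hRx : R ≤ ‖x‖ := by
          have : R ≤ r₁ := by
            rw [hr₁]
            nlinarith [one_le_pow₀ (by norm_num : (1:ℝ) ≤ 2) (n:=k)]
          linarith
        have hx0 : 0 < ‖x‖ := lt_of_lt_of_le hR0 hRx
        have hb := key x hRx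
        have hb2 : c₀ / r₂ ≤ |f x| := by
          have : c₀ / r₂ ≤ c₀ / ‖x‖ :=
            div_le_div_of_nonneg_left hc0p.le hx0 hx2.le
          linarith
        have e4 : (‖f x‖₊ : ENNReal) = ENNReal.ofReal |f x| :=
          Real.enorm_eq_ofReal_abs _
        have h0 : (0:ℝ) ≤ c₀ / r₂ := (div_pos hc0p hr₂0).le
        have e5 : ENNReal.ofReal ((c₀ / r₂) ^ (2:ℝ)) =
            (ENNReal.ofReal (c₀ / r₂)) ^ (2:ℝ) :=
          (ENNReal.ofReal_rpow_of_nonneg (p := (2:ℝ)) h0 (by norm_num)).symm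
        rw [e4, e5]
        exact ENNReal.rpow_le_rpow (ENNReal.ofReal_le_ofReal hb2) (by norm_num)
      · rw [Set.indicator_of_notMem hx]
        exact zero_le
    have hle := lintegral_mono (μ := (volume : Measure (EuclideanSpace ℝ (Fin 3)))) hpoint
    rw [lintegral_indicator_const hAm] at hle
    rw [hvol, ← mul_assoc, ← ENNReal.ofReal_mul (Real.rpow_nonneg (div_pos hc0p hr₂0).le _)] at hle
    refine le_trans (le_trans (mul_le_mul_left (ENNReal.ofReal_le_ofReal ?_) vB) le_rfl) hle
    -- real inequality: c₀^2 * R * 2^k ≤ (c₀/r₂)^(2:ℝ) * (r₂^3 - r₁^3)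
    have e5 : (c₀ / r₂) ^ (2:ℝ) = (c₀ / r₂) ^ (2:ℕ) := by
      rw [← Real.rpow_natCast (c₀ / r₂) 2]
      norm_num
    rw [e5]
    have e6 : (c₀ / r₂) ^ (2:ℕ) * (r₂ ^ 3 - r₁ ^ 3) = (7/4) * (c₀ ^ 2 * R * 2 ^ k) := by
      rw [hr₁, hr₂]
      have h2k : (0:ℝ) < 2 ^ k := by positivity
      field_simp
      ring
    rw [e6]
    nlinarith [pow_pos (by norm_num : (0:ℝ) < 2) k, sq_nonneg c₀, mul_pos (mul_pos (mul_pos hc0p hc0p) hR0) (pow_pos (by norm_num : (0:ℝ) < 2) k)]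
  -- contradiction
  have hβ : 0 < c₀ ^ 2 * R := by positivity
  have hvBr : 0 < vB.toReal := ENNReal.toReal_pos hvB0.ne' hvBt
  obtain ⟨k, hk⟩ := pow_unbounded_of_one_lt (I.toReal / (c₀ ^ 2 * R * vB.toReal))
    (by norm_num : (1:ℝ) < 2)
  have hm := main k
  have hIt : I ≠ ⊤ := h2.ne
  have := ENNReal.toReal_mono hIt hm
  rw [ENNReal.toReal_mul, ENNReal.toReal_ofReal (by positivity)] at this
  rw [div_lt_iff₀ (by positivity)] at hk
  nlinarith
end
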